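/- Let ABC be a triangle. Let ω_{A,C} be the circle through A and B tangent to line AC at A, let ω_{B,A} be the circle through B and C tangent to line BA at B, and let ω_{C,B} be the circle through C and A tangent to line CB at C. Then these three circles have a common point G (a Brocard point of the triangle). -/
import Mathlib


open EuclideanGeometry

open scoped RealInnerProductSpace

/-- The circle `s` is tangent to the affine subspace `L` at `P`: `P` lies on both,
and `s` meets `L` only at `P`. -/
def IsTangentAt (s : Sphere (EuclideanSpace ℝ (Fin 2)))
    (L : AffineSubspace ℝ (EuclideanSpace ℝ (Fin 2))) (P : EuclideanSpace ℝ (Fin 2)) : Prop :=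
  P ∈ s ∧ P ∈ L ∧ ∀ x, x ∈ s → x ∈ L → x = P

private lemma inner_self_pos' {v : EuclideanSpace ℝ (Fin 2)} (hv : v ≠ 0) :
    0 < ⟪v, v⟫ := by
  rw [real_inner_self_eq_norm_sq]
  have : 0 < ‖v‖ := norm_pos_iff.mpr hv
  positivity

private lemma expand_sq (p q w : EuclideanSpace ℝ (Fin 2)) (s t : ℝ) :
    ⟪s • p + t • q - w, s • p + t • q - w⟫
      = s * s * ⟪p, p⟫ + 2 * (s * t) * ⟪p, q⟫ + t * t * ⟪q, q⟫
        - 2 * s * ⟪p, w⟫ - 2 * t * ⟪q, w⟫ + ⟪w, w⟫ := by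
  simp only [inner_sub_left, inner_sub_right, inner_add_left, inner_add_right,
    real_inner_smul_left, real_inner_smul_right]
  linear_combination (s * t) * real_inner_comm p q - s * real_inner_comm p w
    - t * real_inner_comm q w

private lemma norm_eq_of_sq {x y : EuclideanSpace ℝ (Fin 2)}
    (h : ⟪x, x⟫ = ⟪y, y⟫) : ‖x‖ = ‖y‖ := by
  rw [real_inner_self_eq_norm_sq, real_inner_self_eq_norm_sq] at h
  simpa [Real.sqrt_sq (norm_nonneg _)] using congrArg Real.sqrt h

private lemma tangent_perp {s : Sphere (EuclideanSpace ℝ (Fin 2))}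
    {P Q : EuclideanSpace ℝ (Fin 2)} (hPQ : Q ≠ P)
    (ht : IsTangentAt s (line[ℝ, P, Q]) P) :
    ⟪s.center - P, Q - P⟫ = 0 := by
  obtain ⟨hPs, _, huniq⟩ := ht
  set o := s.center with ho
  set v : EuclideanSpace ℝ (Fin 2) := Q - P with hv
  have hvne : v ≠ 0 := sub_ne_zero.mpr hPQ
  have hvn : ⟪v, v⟫ ≠ 0 := ne_of_gt (inner_self_pos' hvne)
  set i : ℝ := ⟪o - P, v⟫ with hi
  set t : ℝ := 2 * i / ⟪v, v⟫ with htt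
  set X : EuclideanSpace ℝ (Fin 2) := AffineMap.lineMap P Q t with hX
  have hXline : X ∈ line[ℝ, P, Q] := AffineMap.lineMap_mem_affineSpan_pair t P Q
  have hXPv : X - P = t • v := by
    simp [hX, AffineMap.lineMap_apply, hv]
  have hXs : X ∈ s := by
    rw [EuclideanGeometry.mem_sphere] at hPs ⊢
    rw [dist_eq_norm] at hPs ⊢
    rw [← hPs]
    apply norm_eq_of_sq
    have hXo : X - o = t • v + (0:ℝ) • v - (o - P) := by
      rw [← hXPv]; simp only [one_smul, zero_smul, neg_smul, add_zero, zero_add]; abel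
    have hPo : P - o = (0:ℝ) • v + (0:ℝ) • v - (o - P) := by simp only [one_smul, zero_smul, neg_smul, add_zero, zero_add]; abel
    rw [hXo, hPo, expand_sq, expand_sq]
    have h1 : ⟪v, o - P⟫ = i := by rw [hi, real_inner_comm]
    have key : t * ⟪v, v⟫ = 2 * i := by
      rw [htt]; exact div_mul_cancel₀ (2 * i) hvn
    rw [h1]
    linear_combination t * key
  have hXP : X = P := huniq X hXs hXline
  have ht0 : t • v = 0 := by rw [← hXPv, hXP, sub_self]
  have htz : t = 0 := by
    rcases smul_eq_zero.mp ht0 with h | h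
    · exact h
    · exact absurd h hvne
  rw [htt, div_eq_zero_iff] at htz
  rcases htz with h | h
  · linarith
  · exact absurd h hvn

set_option maxHeartbeats 1000000 in
/-- **Brocard point.** The circle `ω_{A,C}` through `A` and `B` tangent to line `AC`
at `A`, the circle `ω_{B,A}` through `B` and `C` tangent to line `BA` at `B`, and the
circle `ω_{C,B}` through `C` and `A` tangent to line `CB` at `C` have a common
point. -/
theorem brocard_point_exists
    (A B C : EuclideanSpace ℝ (Fin 2))
    (hABC : AffineIndependent ℝ ![A, B, C])
    (ωAC ωBA ωCB : Sphere (EuclideanSpace ℝ (Fin 2)))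
    (hωAC : B ∈ ωAC ∧ IsTangentAt ωAC (line[ℝ, A, C]) A)
    (hωBA : C ∈ ωBA ∧ IsTangentAt ωBA (line[ℝ, B, A]) B)
    (hωCB : A ∈ ωCB ∧ IsTangentAt ωCB (line[ℝ, C, B]) C) :
    ∃ G : EuclideanSpace ℝ (Fin 2), G ∈ ωAC ∧ G ∈ ωBA ∧ G ∈ ωCB := by
  have hinj := hABC.injective
  have hAB : A ≠ B := fun h => by
    have := hinj.ne (show (0 : Fin 3) ≠ 1 by decide); simp [h] at this
  have hAC : A ≠ C := fun h => by
    have := hinj.ne (show (0 : Fin 3) ≠ 2 by decide); simp [h] at this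
  have hBC : B ≠ C := fun h => by
    have := hinj.ne (show (1 : Fin 3) ≠ 2 by decide); simp [h] at this
  have hp1 : ⟪ωAC.center - A, C - A⟫ = 0 := tangent_perp (Ne.symm hAC) hωAC.2
  have hp2 : ⟪ωBA.center - B, A - B⟫ = 0 := tangent_perp hAB hωBA.2
  have hp3 : ⟪ωCB.center - C, B - C⟫ = 0 := tangent_perp hBC hωCB.2
  have hB1 : dist B ωAC.center = ωAC.radius := hωAC.1
  have hA1 : dist A ωAC.center = ωAC.radius := hωAC.2.1
  have hC2 : dist C ωBA.center = ωBA.radius := hωBA.1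
  have hB2 : dist B ωBA.center = ωBA.radius := hωBA.2.1
  have hA3 : dist A ωCB.center = ωCB.radius := hωCB.1
  have hC3 : dist C ωCB.center = ωCB.radius := hωCB.2.1
  set u : EuclideanSpace ℝ (Fin 2) := B - A with hu
  set v : EuclideanSpace ℝ (Fin 2) := C - A with hv
  set a : ℝ := ⟪u, u⟫ with ha
  set b : ℝ := ⟪v, v⟫ with hb
  set c : ℝ := ⟪u, v⟫ with hc
  have hune : u ≠ 0 := sub_ne_zero.mpr (Ne.symm hAB)
  have hvne : v ≠ 0 := sub_ne_zero.mpr (Ne.symm hAC)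
  have hwne : v - u ≠ 0 := by
    intro h
    exact hBC (by
      have h2 : C - B = 0 := by
        rw [show C - B = v - u by rw [hu, hv]; abel, h]
      exact (sub_eq_zero.mp h2).symm)
  have hapos : 0 < a := inner_self_pos' hune
  have hbpos : 0 < b := inner_self_pos' hvne
  have happos : 0 < a + b - 2 * c := by
    have h := inner_self_pos' hwne
    rw [inner_sub_sub_self] at h
    have hcomm : ⟪v, u⟫ = ⟪u, v⟫ := real_inner_comm u v
    rw [hcomm, ← hb, ← hc, ← ha] at h
    linarith
  set D : ℝ := a * b + (a + b) * (a + b - 2 * c) with hD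
  have hDpos : 0 < D := by positivity
  have hDne : D ≠ 0 := ne_of_gt hDpos
  set x : ℝ := a * b / D with hx
  set y : ℝ := a * (a + b - 2 * c) / D with hy
  refine ⟨A + (x • u + y • v), ?_, ?_, ?_⟩
  · -- G ∈ ωAC
    rw [EuclideanGeometry.mem_sphere, dist_eq_norm, ← hA1, dist_eq_norm]
    apply norm_eq_of_sq
    set w : EuclideanSpace ℝ (Fin 2) := ωAC.center - A with hw
    have h2 : a = 2 * ⟪u, w⟫ := by
      have hnn : ⟪B - ωAC.center, B - ωAC.center⟫ = ⟪A - ωAC.center, A - ωAC.center⟫ := by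
        rw [real_inner_self_eq_norm_sq, real_inner_self_eq_norm_sq,
          ← dist_eq_norm, ← dist_eq_norm, hB1, hA1]
      have e1 : B - ωAC.center = (1:ℝ) • u + (0:ℝ) • v - w := by rw [hu, hw]; simp only [one_smul, zero_smul, neg_smul, add_zero, zero_add]; abel
      have e2 : A - ωAC.center = (0:ℝ) • u + (0:ℝ) • v - w := by rw [hw]; simp only [one_smul, zero_smul, neg_smul, add_zero, zero_add]; abel
      rw [e1, e2, expand_sq, expand_sq] at hnn
      rw [← ha] at hnn
      linarith
    have hvw : ⟪v, w⟫ = 0 := by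
      rw [real_inner_comm]; rw [hw, hv]; exact hp1
    have e1 : A + (x • u + y • v) - ωAC.center = x • u + y • v - w := by rw [hw]; abel
    have e2 : A - ωAC.center = (0:ℝ) • u + (0:ℝ) • v - w := by rw [hw]; simp only [one_smul, zero_smul, add_zero, zero_add]; abel
    rw [e1, e2, expand_sq, expand_sq, ← ha, ← hb, ← hc, hvw]
    have hgoal : x * x * a + 2 * (x * y) * c + y * y * b = x * a := by
      rw [hx, hy]
      field_simp
      ring
    linear_combination hgoal + x * h2
  · -- G ∈ ωBA
    rw [EuclideanGeometry.mem_sphere, dist_eq_norm, ← hB2, dist_eq_norm]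
    apply norm_eq_of_sq
    set w : EuclideanSpace ℝ (Fin 2) := ωBA.center - B with hw
    have huw : ⟪u, w⟫ = 0 := by
      have h := hp2
      rw [show A - B = -u by rw [hu]; abel, inner_neg_right] at h
      have h' : ⟪ωBA.center - B, u⟫ = 0 := neg_eq_zero.mp h
      rw [real_inner_comm, hw]; exact h'
    have h2 : a + b - 2 * c = 2 * ⟪v, w⟫ := by
      have hnn : ⟪C - ωBA.center, C - ωBA.center⟫ = ⟪B - ωBA.center, B - ωBA.center⟫ := by
        rw [real_inner_self_eq_norm_sq, real_inner_self_eq_norm_sq,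
          ← dist_eq_norm, ← dist_eq_norm, hC2, hB2]
      have e1 : C - ωBA.center = (-1 : ℝ) • u + (1:ℝ) • v - w := by
        rw [hu, hv, hw]; simp only [one_smul, zero_smul, neg_smul, add_zero, zero_add]; abel
      have e2 : B - ωBA.center = (0:ℝ) • u + (0:ℝ) • v - w := by rw [hw]; simp only [one_smul, zero_smul, neg_smul, add_zero, zero_add]; abel
      rw [e1, e2, expand_sq, expand_sq, ← ha, ← hb, ← hc, huw] at hnn
      linarith
    have e1 : A + (x • u + y • v) - ωBA.center = (x - 1) • u + y • v - w := by
      rw [hw, hu, sub_smul, one_smul]; abel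
    have e2 : B - ωBA.center = (0:ℝ) • u + (0:ℝ) • v - w := by rw [hw]; simp only [one_smul, zero_smul, add_zero, zero_add]; abel
    rw [e1, e2, expand_sq, expand_sq, ← ha, ← hb, ← hc, huw]
    have hgoal : (x - 1) * (x - 1) * a + 2 * ((x - 1) * y) * c + y * y * b
        = y * (a + b - 2 * c) := by
      rw [hx, hy]
      field_simp
      ring
    linear_combination hgoal + y * h2
  · -- G ∈ ωCB
    rw [EuclideanGeometry.mem_sphere, dist_eq_norm, ← hC3, dist_eq_norm]
    apply norm_eq_of_sq
    set w : EuclideanSpace ℝ (Fin 2) := ωCB.center - C with hw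
    have hperp : ⟪u, w⟫ = ⟪v, w⟫ := by
      have h := hp3
      rw [show B - C = u - v by rw [hu, hv]; abel, inner_sub_right] at h
      have h1 : ⟪ωCB.center - C, u⟫ = ⟪ωCB.center - C, v⟫ := by linarith
      rw [← real_inner_comm u w, ← real_inner_comm v w, hw]
      exact h1
    have h2 : b = -(2 * ⟪v, w⟫) := by
      have hnn : ⟪A - ωCB.center, A - ωCB.center⟫ = ⟪C - ωCB.center, C - ωCB.center⟫ := by
        rw [real_inner_self_eq_norm_sq, real_inner_self_eq_norm_sq,
          ← dist_eq_norm, ← dist_eq_norm, hA3, hC3]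
      have e1 : A - ωCB.center = (0:ℝ) • u + (-1 : ℝ) • v - w := by
        rw [hv, hw]; simp only [one_smul, zero_smul, neg_smul, add_zero, zero_add]; abel
      have e2 : C - ωCB.center = (0:ℝ) • u + (0:ℝ) • v - w := by rw [hw]; simp only [one_smul, zero_smul, neg_smul, add_zero, zero_add]; abel
      rw [e1, e2, expand_sq, expand_sq, ← hb] at hnn
      linarith
    have hvw : ⟪v, w⟫ = -(b / 2) := by linarith
    have huw : ⟪u, w⟫ = -(b / 2) := by rw [hperp, hvw]
    have e1 : A + (x • u + y • v) - ωCB.center = x • u + (y - 1) • v - w := by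
      rw [hw, hv, sub_smul, one_smul]; abel
    have e2 : C - ωCB.center = (0:ℝ) • u + (0:ℝ) • v - w := by rw [hw]; simp only [one_smul, zero_smul, add_zero, zero_add]; abel
    rw [e1, e2, expand_sq, expand_sq, ← ha, ← hb, ← hc, huw, hvw]
    have hgoal : x * x * a + 2 * (x * (y - 1)) * c + (y - 1) * (y - 1) * b
        = (1 - x - y) * b := by
      rw [hx, hy]
      field_simp
      ring
    linear_combination hgoal
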